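/- Let λ be an uncountable regular cardinal, let S ⊆ S^λ_ω be stationary in λ, and let ⟨C_δ : δ ∈ S⟩ be a club-guessing sequence on S. Then for every natural number n and every disjoint type t of length n, there exist γ < δ, both in S, such that C_γ[n] and C_δ[n] are disjoint and tp(C_γ[n], C_δ[n]) = t, where for a set A of ordinals, A[n] denotes the set of the first n elements of A in increasing order. -/

import Mathlib

open Cardinal

/-- `D` is club (closed and unbounded) in the limit ordinal `l`. -/
def IsClubIn (D : Set Ordinal) (l : Ordinal) : Prop :=
  D ⊆ Set.Iio l ∧
  (∀ a < l, ∃ b ∈ D, a < b) ∧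
  (∀ a < l, a ≠ 0 → sSup (D ∩ Set.Iio a) = a → a ∈ D)

/-- `S` is stationary in `l`: it meets every club subset of `l`. -/
def IsStationaryIn (S : Set Ordinal) (l : Ordinal) : Prop :=
  ∀ D : Set Ordinal, IsClubIn D l → (S ∩ D).Nonempty

/-- The order type of a set of ordinals. -/
noncomputable def setOtp (A : Set Ordinal) : Ordinal :=
  Ordinal.type ((· < ·) : A → A → Prop)

/-- `t : 2n → 2` is a disjoint type of length `n`: it takes each of the values `0` and `1`
exactly `n` times. -/
def IsDisjointType (n : ℕ) (t : Fin (2 * n) → Fin 2) : Prop :=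
  (Finset.univ.filter fun i => t i = 0).card = n

/-- `F` is the set of the first `n` elements of `A` (in increasing order). -/
def IsFirstN (A : Set Ordinal) (n : ℕ) (F : Finset Ordinal) : Prop :=
  ↑F ⊆ A ∧ F.card = n ∧ ∀ x ∈ A, x ∉ F → ∀ y ∈ F, y < x

/-- `a` and `b` (each of size `n`) realize the disjoint type `t : 2n → 2`: listing `a ∪ b` in
increasing order as `α₀ < … < α_{2n-1}`, `a = {αᵢ : t i = 0}` and `b = {αᵢ : t i = 1}`. -/
def HasType (n : ℕ) (a b : Finset Ordinal) (t : Fin (2 * n) → Fin 2) : Prop :=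
  a.card = n ∧ b.card = n ∧
    ∃ h : (a ∪ b).card = 2 * n,
      ∀ i : Fin (2 * n), (((a ∪ b).orderIsoOfFin h i : Ordinal) ∈ a ↔ t i = 0)

/-- Auxiliary goodness predicate: `GoodP S C L n r P` says that the finite set `P` can be
extended, by adding `r` more elements one by one (each one above any prescribed bound),
to a full "first-n trace" that is realized by unboundedly many `γ ∈ S`. -/
def GoodP (S : Set Ordinal) (C : Ordinal → Set Ordinal) (L : Ordinal) (n : ℕ) :
    ℕ → Finset Ordinal → Prop
  | 0, P => ∀ b < L, ∃ γ ∈ S, b < γ ∧ IsFirstN (C γ) n P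
  | r + 1, P => ∀ ζ < L, ∃ ξ, ξ < L ∧ ζ < ξ ∧ (∀ p ∈ P, p < ξ) ∧
      GoodP S C L n r (insert ξ P)

/-- A bound witnessing badness (non-goodness), with its defining properties. -/
theorem exists_badBound (S : Set Ordinal) (C : Ordinal → Set Ordinal) (L : Ordinal) (n : ℕ)
    (r : ℕ) (P : Finset Ordinal) :
    ∃ z : Ordinal, (GoodP S C L n r P → z = 0) ∧ (¬ GoodP S C L n r P →
      (z < L ∧
        (r = 0 → ∀ γ ∈ S, IsFirstN (C γ) n P → γ ≤ z) ∧
        (∀ r', r = r' + 1 → ∀ ξ, ξ < L → z < ξ → (∀ p ∈ P, p < ξ) →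
          ¬ GoodP S C L n r' (insert ξ P)))) := by
  by_cases h : GoodP S C L n r P
  · exact ⟨0, fun _ => rfl, fun hh => absurd h hh⟩
  · have hbad := h
    cases r with
    | zero =>
      simp only [GoodP] at h
      push_neg at h
      obtain ⟨b, hbL, hb⟩ := h
      refine ⟨b, fun hg => absurd hg hbad, fun _ => ⟨hbL, fun _ γ hγ hfirst => ?_, fun r' hr' => by omega⟩⟩
      by_contra hle
      exact (hb γ hγ (lt_of_not_ge hle)) hfirst
    | succ s =>
      simp only [GoodP] at h
      push_neg at h
      obtain ⟨ζ, hζL, hζ⟩ := h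
      refine ⟨ζ, fun hg => absurd hg hbad, fun _ => ⟨hζL, fun h0 => by omega, fun r' hr' ξ hξL hζξ hPξ => ?_⟩⟩
      obtain rfl : s = r' := by omega
      exact hζ ξ hξL hζξ hPξ

/-- The chosen bound. -/
noncomputable def zB (S : Set Ordinal) (C : Ordinal → Set Ordinal) (L : Ordinal) (n : ℕ)
    (r : ℕ) (P : Finset Ordinal) : Ordinal :=
  (exists_badBound S C L n r P).choose

theorem zB_lt {S : Set Ordinal} {C : Ordinal → Set Ordinal} {L : Ordinal} {n r : ℕ}
    {P : Finset Ordinal} (h : ¬ GoodP S C L n r P) : zB S C L n r P < L :=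
  (((exists_badBound S C L n r P).choose_spec).2 h).1

theorem zB_lt' {S : Set Ordinal} {C : Ordinal → Set Ordinal} {L : Ordinal} {n r : ℕ}
    {P : Finset Ordinal} (hL : 0 < L) : zB S C L n r P < L := by
  by_cases h : GoodP S C L n r P
  · rw [zB, ((exists_badBound S C L n r P).choose_spec).1 h]; exact hL
  · exact zB_lt h

theorem zB_spec0 {S : Set Ordinal} {C : Ordinal → Set Ordinal} {L : Ordinal} {n : ℕ}
    {P : Finset Ordinal} (h : ¬ GoodP S C L n 0 P) :
    ∀ γ ∈ S, IsFirstN (C γ) n P → γ ≤ zB S C L n 0 P :=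
  (((exists_badBound S C L n 0 P).choose_spec).2 h).2.1 rfl

theorem zB_specSucc {S : Set Ordinal} {C : Ordinal → Set Ordinal} {L : Ordinal} {n r : ℕ}
    {P : Finset Ordinal} (h : ¬ GoodP S C L n (r + 1) P) :
    ∀ ξ, ξ < L → zB S C L n (r + 1) P < ξ → (∀ p ∈ P, p < ξ) →
      ¬ GoodP S C L n r (insert ξ P) :=
  (((exists_badBound S C L n (r + 1) P).choose_spec).2 h).2.2 r rfl

/-- The main extendibility lemma: the empty set is `n`-good. -/
theorem goodP_empty (lam : Cardinal.{0}) (hlam : lam.IsRegular)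
    (hunc : Cardinal.aleph0 < lam)
    (S : Set Ordinal) (hS : S ⊆ {α : Ordinal | α < lam.ord ∧ α.cof = Cardinal.aleph0})
    (C : Ordinal → Set Ordinal)
    (hC : ∀ δ ∈ S, IsClubIn (C δ) δ ∧ setOtp (C δ) = Ordinal.omega0)
    (hguess : ∀ D : Set Ordinal, IsClubIn D lam.ord →
      IsStationaryIn {δ ∈ S | C δ ⊆ D} lam.ord) (n : ℕ) :
    GoodP S C lam.ord n n ∅ := by
  classical
  set L := lam.ord with hLdef
  have hL0 : (0 : Ordinal) < L := by
    calc (0 : Ordinal) < Cardinal.aleph0.ord := by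
          rw [Cardinal.ord_aleph0]; exact Ordinal.omega0_pos
    _ ≤ L := Cardinal.ord_le_ord.2 hlam.aleph0_le
  have hLlim : Order.IsSuccLimit L := Cardinal.isSuccLimit_ord hlam.aleph0_le
  by_contra hbad
  -- the step function producing closure points of all the bad bounds
  have step : ∀ x < L, ∃ y, x < y ∧ y < L ∧ ∀ P : Finset Ordinal, (∀ p ∈ P, p < x) →
      P.card ≤ n → ∀ r ≤ n, ¬ GoodP S C L n r P → zB S C L n r P < y := by
    intro x hx
    set f : Fin (n+1) × (Fin n → x.ToType) → Ordinal := fun q =>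
      zB S C L n q.1 (Finset.image
        (fun i => (((Ordinal.ToType.mk (o := x)).symm (q.2 i) : Set.Iio x) : Ordinal))
        Finset.univ) with hf
    set g : Fin (n+1) → Ordinal := fun r => zB S C L n r ∅ with hg
    have hcard : Cardinal.lift.{0,0} #(Fin (n+1) × (Fin n → x.ToType)) < lam := by
      rw [Cardinal.lift_id, Cardinal.mk_prod, Cardinal.lift_id, Cardinal.lift_id]
      have h1 : #(Fin (n+1)) < lam := by
        rw [Cardinal.mk_fin]; exact (Cardinal.nat_lt_aleph0 _).trans hunc
      have h2 : #(Fin n → x.ToType) < lam := by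
        have he : #(Fin n → x.ToType) = #(x.ToType) ^ (n : Cardinal) := by
          rw [← Cardinal.mk_fin n, Cardinal.power_def]
        rw [he, Cardinal.mk_toType]
        calc x.card ^ (n : Cardinal) ≤ max x.card ℵ₀ := Cardinal.power_nat_le_max
        _ < lam := max_lt (Cardinal.lt_ord.mp hx) hunc
      exact Cardinal.mul_lt_of_lt hlam.aleph0_le h1 h2
    have hcardg : Cardinal.lift.{0,0} #(Fin (n+1)) < lam := by
      rw [Cardinal.lift_id, Cardinal.mk_fin]
      exact (Cardinal.nat_lt_aleph0 _).trans hunc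
    have hsupf : iSup f < L :=
      Cardinal.iSup_lt_ord_lift_of_isRegular hlam hcard (fun q => zB_lt' hL0)
    have hsupg : iSup g < L :=
      Cardinal.iSup_lt_ord_lift_of_isRegular hlam hcardg (fun q => zB_lt' hL0)
    refine ⟨(max x (max (iSup f) (iSup g))) + 1, ?_, ?_, ?_⟩
    · rw [Ordinal.add_one_eq_succ]
      exact (le_max_left _ _).trans_lt (Order.lt_succ _)
    · rw [Ordinal.add_one_eq_succ]
      exact hLlim.succ_lt (max_lt hx (max_lt hsupf hsupg))
    · intro P hPx hPcard r hr hbadP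
      have hzle : zB S C L n r P ≤ max (iSup f) (iSup g) := by
        rcases P.eq_empty_or_nonempty with rfl | hne
        · exact le_trans (le_ciSup (Ordinal.bddAbove_range g) (⟨r, by omega⟩ : Fin (n+1)))
            (le_max_right _ _)
        · obtain ⟨p0, hp0⟩ := hne
          set l := P.sort (· ≤ ·) with hl
          have hlen : l.length = P.card := Finset.length_sort _
          set u : Fin n → Ordinal := fun i => l.getD i p0 with hu
          have humem : ∀ i, u i ∈ P := by
            intro i
            by_cases hi : (i : ℕ) < l.length
            · rw [hu]; simp only [List.getD_eq_getElem _ _ hi]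
              exact Finset.mem_sort (α := Ordinal) (· ≤ ·) |>.1 (List.getElem_mem _)
            · rw [hu]; simp only [List.getD_eq_default _ _ (le_of_not_gt hi)]; exact hp0
          set w : Fin n → x.ToType := fun i =>
            Ordinal.ToType.mk (o := x) ⟨u i, hPx _ (humem i)⟩ with hw
          have hcomp : ∀ i, (((Ordinal.ToType.mk (o := x)).symm (w i) : Set.Iio x) : Ordinal)
              = u i := by
            intro i; rw [hw]; simp
          have himg : Finset.image
              (fun i => (((Ordinal.ToType.mk (o := x)).symm (w i) : Set.Iio x) : Ordinal))
              Finset.univ = P := by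
            ext y
            simp only [Finset.mem_image, Finset.mem_univ, true_and]
            constructor
            · rintro ⟨i, rfl⟩
              rw [hcomp i]; exact humem i
            · intro hy
              have hyl : y ∈ l := Finset.mem_sort (α := Ordinal) (· ≤ ·) |>.2 hy
              obtain ⟨i, hilen, hieq⟩ := List.mem_iff_getElem.1 hyl
              have hin : i < n := lt_of_lt_of_le (hlen ▸ hilen) hPcard
              refine ⟨⟨i, hin⟩, ?_⟩
              rw [hcomp, hu]
              simp only [List.getD_eq_getElem _ _ hilen]
              exact hieq
          have : zB S C L n r P = f (⟨r, by omega⟩, w) := by rw [hf]; simp only [himg]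
          rw [this]
          exact le_trans (le_ciSup (Ordinal.bddAbove_range f) _) (le_max_left _ _)
      calc zB S C L n r P ≤ max (iSup f) (iSup g) := hzle
      _ ≤ max x (max (iSup f) (iSup g)) := le_max_right _ _
      _ < _ + 1 := by rw [Ordinal.add_one_eq_succ]; exact Order.lt_succ _
  -- the club of closure points
  set D : Set Ordinal := {ε | ε < L ∧ ∀ P : Finset Ordinal, (∀ p ∈ P, p < ε) →
      P.card ≤ n → ∀ r ≤ n, ¬ GoodP S C L n r P → zB S C L n r P < ε} with hD
  have hDclub : IsClubIn D L := by
    refine ⟨fun ε hε => hε.1, ?_, ?_⟩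
    · -- unboundedness
      intro a ha
      let seq : ℕ → {y : Ordinal // y < L} := fun k => Nat.rec
        ⟨a + 1, by rw [Ordinal.add_one_eq_succ]; exact hLlim.succ_lt ha⟩
        (fun _ ih => ⟨(step ih.1 ih.2).choose, ((step ih.1 ih.2).choose_spec).2.1⟩) k
      have hseqprop : ∀ k, ∀ P : Finset Ordinal, (∀ p ∈ P, p < (seq k).1) → P.card ≤ n →
          ∀ r ≤ n, ¬ GoodP S C L n r P → zB S C L n r P < (seq (k+1)).1 :=
        fun k => ((step (seq k).1 (seq k).2).choose_spec).2.2
      have hbL : iSup (fun k => (seq k).1) < L := by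
        refine Cardinal.iSup_lt_ord_lift_of_isRegular hlam ?_ (fun k => (seq k).2)
        rw [Cardinal.lift_id, Cardinal.mk_nat]
        exact hunc
      have ha1 : a < (seq 0).1 := by
        show a < a + 1
        rw [Ordinal.add_one_eq_succ]; exact Order.lt_succ _
      have hab : a < iSup (fun k => (seq k).1) :=
        lt_of_lt_of_le ha1 (le_ciSup (Ordinal.bddAbove_range _) 0)
      refine ⟨iSup (fun k => (seq k).1), ⟨hbL, ?_⟩, hab⟩
      intro P hP hPcard r hr hbadP
      have hPb : P.sup id < iSup (fun k => (seq k).1) := by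
        rw [Finset.sup_lt_iff (lt_of_le_of_lt (zero_le (a := a)) hab)]
        exact fun p hp => hP p hp
      have hex : ∃ k, P.sup id < (seq k).1 := by
        by_contra hc
        push_neg at hc
        exact absurd (lt_of_lt_of_le hPb (ciSup_le hc)) (lt_irrefl _)
      obtain ⟨k, hk⟩ := hex
      have := hseqprop k P (fun p hp => lt_of_le_of_lt (Finset.le_sup (f := id) hp) hk)
        hPcard r hr hbadP
      exact this.trans_le (le_ciSup (Ordinal.bddAbove_range _) (k+1))
    · -- closedness
      intro a haL ha0 hsup
      refine ⟨haL, ?_⟩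
      intro P hP hPcard r hr hbadP
      have hne : (D ∩ Set.Iio a).Nonempty := by
        by_contra hemp
        rw [Set.not_nonempty_iff_eq_empty] at hemp
        rw [hemp, csSup_empty] at hsup
        exact ha0 hsup.symm
      have hsupP : P.sup id < a := by
        rw [Finset.sup_lt_iff (pos_iff_ne_zero.2 ha0)]
        exact fun p hp => hP p hp
      have hex : ∃ d ∈ D ∩ Set.Iio a, P.sup id < d := by
        by_contra hcon
        push_neg at hcon
        have : sSup (D ∩ Set.Iio a) ≤ P.sup id := csSup_le hne hcon
        rw [hsup] at this
        exact absurd (lt_of_lt_of_le hsupP this) (lt_irrefl _)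
      obtain ⟨d, ⟨hdD, hda⟩, hPd⟩ := hex
      have : zB S C L n r P < d :=
        hdD.2 P (fun p hp => lt_of_le_of_lt (Finset.le_sup (f := id) hp) hPd) hPcard r hr hbadP
      exact this.trans hda
  -- pick a guessed point
  have hIioClub : IsClubIn (Set.Iio L) L := by
    refine ⟨fun ε hε => hε, ?_, ?_⟩
    · intro a ha
      exact ⟨a + 1, by rw [Ordinal.add_one_eq_succ]; exact hLlim.succ_lt ha,
        by rw [Ordinal.add_one_eq_succ]; exact Order.lt_succ _⟩
    · intro a ha _ _
      exact ha
  obtain ⟨δ, hδmem, -⟩ := hguess D hDclub (Set.Iio L) hIioClub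
  obtain ⟨hδS, hδD⟩ := hδmem
  obtain ⟨hδL, hδcof⟩ := hS hδS
  obtain ⟨hclub, -⟩ := hC δ hδS
  obtain ⟨hCsub, hCunb, -⟩ := hclub
  have hδ0 : (0 : Ordinal) < δ := by
    rcases eq_zero_or_pos δ with rfl | h
    · rw [Ordinal.cof_zero] at hδcof
      exact absurd hδcof.symm Cardinal.aleph0_ne_zero
    · exact h
  have hCne : (C δ).Nonempty := by
    obtain ⟨b, hb, -⟩ := hCunb 0 hδ0
    exact ⟨b, hb⟩
  -- the increasing enumeration of `C δ`
  let c : ℕ → Ordinal := fun k => Nat.rec (sInf (C δ)) (fun _ ck => sInf (C δ ∩ Set.Ioi ck)) k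
  have hcmem : ∀ k, c k ∈ C δ ∧ (C δ ∩ Set.Ioi (c k)).Nonempty := by
    intro k
    induction k with
    | zero =>
      have h0 : c 0 ∈ C δ := csInf_mem hCne
      obtain ⟨b, hb, hb2⟩ := hCunb (c 0) (hCsub h0)
      exact ⟨h0, b, hb, hb2⟩
    | succ k ih =>
      have h1 : c (k+1) ∈ C δ ∩ Set.Ioi (c k) := csInf_mem ih.2
      obtain ⟨b, hb, hb2⟩ := hCunb (c (k+1)) (hCsub h1.1)
      exact ⟨h1.1, b, hb, hb2⟩
  have hclt : ∀ k, c k < c (k+1) := fun k => (csInf_mem (hcmem k).2).2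
  have hcmono : StrictMono c := strictMono_nat_of_lt_succ hclt
  have hmin : ∀ x ∈ C δ, ∀ j, (∀ i ≤ j, x ≠ c i) → c j < x := by
    intro x hx j
    induction j with
    | zero =>
      intro hne
      exact lt_of_le_of_ne (csInf_le (OrderBot.bddBelow _) hx) (fun h => hne 0 le_rfl h.symm)
    | succ j ih =>
      intro hne
      have hj : c j < x := ih (fun i hi => hne i (hi.trans (Nat.le_succ j)))
      exact lt_of_le_of_ne (csInf_le (OrderBot.bddBelow _) ⟨hx, hj⟩)
        (fun h => hne (j+1) le_rfl h.symm)
  let P : ℕ → Finset Ordinal := fun k => (Finset.range k).image c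
  have hPcard : ∀ k, (P k).card = k := fun k => by
    rw [show P k = (Finset.range k).image c from rfl,
      Finset.card_image_of_injective _ hcmono.injective, Finset.card_range]
  have hPlt : ∀ k, ∀ p ∈ P k, p < c k := by
    intro k p hp
    obtain ⟨j, hj, rfl⟩ := Finset.mem_image.1 hp
    exact hcmono (Finset.mem_range.1 hj)
  have hPins : ∀ k, P (k+1) = insert (c k) (P k) := fun k => by
    rw [show P (k+1) = (Finset.range (k+1)).image c from rfl, Finset.range_add_one,
      Finset.image_insert]
  have hfirst : ∀ k, IsFirstN (C δ) k (P k) := by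
    intro k
    refine ⟨?_, hPcard k, ?_⟩
    · intro p hp
      obtain ⟨j, hj, rfl⟩ := Finset.mem_image.1 (Finset.mem_coe.1 hp)
      exact (hcmem j).1
    · intro x hx hxP y hy
      obtain ⟨j, hj, rfl⟩ := Finset.mem_image.1 hy
      refine hmin x hx j ?_
      intro i hi heq
      exact hxP (heq ▸ Finset.mem_image_of_mem c
        (Finset.mem_range.2 (lt_of_le_of_lt hi (Finset.mem_range.1 hj))))
  have hcD : ∀ k, c k ∈ D := fun k => hδD (hcmem k).1
  have hcL : ∀ k, c k < L := fun k => lt_trans (hCsub (hcmem k).1) hδL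
  have hwalk : ∀ k, k ≤ n → ¬ GoodP S C L n (n - k) (P k) := by
    intro k
    induction k with
    | zero =>
      intro _
      have hP0 : P 0 = ∅ := by
        rw [show P 0 = (Finset.range 0).image c from rfl]
        simp
      rw [hP0, Nat.sub_zero]
      exact hbad
    | succ k ih =>
      intro hk1
      have hk : k ≤ n := Nat.le_of_succ_le hk1
      have hbadk := ih hk
      have hzlt : zB S C L n (n - k) (P k) < c k :=
        (hcD k).2 (P k) (hPlt k) (by rw [hPcard]; exact hk) (n - k) (Nat.sub_le n k) hbadk
      have hrw : n - k = (n - (k+1)) + 1 := by omega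
      rw [hrw] at hbadk hzlt
      have hres := zB_specSucc hbadk (c k) (hcL k) hzlt (hPlt k)
      rw [← hPins k] at hres
      exact hres
  have hlast := hwalk n le_rfl
  rw [Nat.sub_self] at hlast
  have hle : δ ≤ zB S C L n 0 (P n) := zB_spec0 hlast δ hδS (hfirst n)
  have hlt : zB S C L n 0 (P n) < c n :=
    (hcD n).2 (P n) (hPlt n) (by rw [hPcard]) 0 (Nat.zero_le _) hlast
  exact absurd (lt_of_le_of_lt hle (lt_trans hlt (hCsub (hcmem n).1))) (lt_irrefl δ)

/-- If `λ` is an uncountable regular cardinal, `S ⊆ S^λ_ω` is stationary, and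
`⟨C_δ : δ ∈ S⟩` is a club-guessing sequence on `S`, then for every `n` and every disjoint
type `t` of length `n` there are `γ < δ` in `S` such that `C_γ[n]` and `C_δ[n]` are
disjoint and `tp(C_γ[n], C_δ[n]) = t`. -/
theorem club_guessing_realizes_types (lam : Cardinal.{0}) (hlam : lam.IsRegular)
    (hunc : Cardinal.aleph0 < lam)
    (S : Set Ordinal) (hS : S ⊆ {α : Ordinal | α < lam.ord ∧ α.cof = Cardinal.aleph0})
    (hstat : IsStationaryIn S lam.ord)
    (C : Ordinal → Set Ordinal)
    (hC : ∀ δ ∈ S, IsClubIn (C δ) δ ∧ setOtp (C δ) = Ordinal.omega0)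
    (hguess : ∀ D : Set Ordinal, IsClubIn D lam.ord →
      IsStationaryIn {δ ∈ S | C δ ⊆ D} lam.ord)
    (n : ℕ) (t : Fin (2 * n) → Fin 2) (ht : IsDisjointType n t) :
    ∃ γ ∈ S, ∃ δ ∈ S, γ < δ ∧
      ∃ Fγ Fδ : Finset Ordinal, IsFirstN (C γ) n Fγ ∧ IsFirstN (C δ) n Fδ ∧
        Disjoint Fγ Fδ ∧ HasType n Fγ Fδ t := by
  classical
  set L := lam.ord with hLdef
  have hL0 : (0 : Ordinal) < L := by
    calc (0 : Ordinal) < Cardinal.aleph0.ord := by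
          rw [Cardinal.ord_aleph0]; exact Ordinal.omega0_pos
    _ ≤ L := Cardinal.ord_le_ord.2 hlam.aleph0_le
  have hgood : GoodP S C L n n ∅ := goodP_empty lam hlam hunc S hS C hC hguess n
  set t' : ℕ → Fin 2 := fun j => if h : j < 2 * n then t ⟨j, h⟩ else 0 with ht'
  have ht'eq : ∀ i : Fin (2 * n), t' (i : ℕ) = t i := by
    intro i
    rw [ht']
    simp only [i.isLt, dif_pos, Fin.eta]
  have hfin2 : ∀ a : Fin 2, ¬ a = 0 ↔ a = 1 := by decide
  set cnt : Fin 2 → ℕ → ℕ :=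
    fun w i => ((Finset.range i).filter (fun j => t' j = w)).card with hcnt
  have hcnt0 : cnt 0 (2 * n) = n := by
    have hbij : ((Finset.range (2*n)).filter (fun j => t' j = 0)).card
        = (Finset.univ.filter (fun i : Fin (2*n) => t i = 0)).card := by
      refine Finset.card_bij' (fun (j : ℕ) (hj : j ∈ (Finset.range (2*n)).filter
          (fun j => t' j = 0)) => (⟨j, Finset.mem_range.1 (Finset.mem_filter.1 hj).1⟩ : Fin (2*n)))
        (fun (i : Fin (2*n)) _ => (i : ℕ)) ?_ ?_ ?_ ?_
      · intro a ha
        simp only [Finset.mem_filter, Finset.mem_univ, true_and]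
        have h2 := (Finset.mem_filter.1 ha).2
        rwa [ht'eq ⟨a, _⟩] at h2
      · intro a ha
        refine Finset.mem_filter.2 ⟨Finset.mem_range.2 a.isLt, ?_⟩
        rw [ht'eq a]
        exact (Finset.mem_filter.1 ha).2
      · intro a ha
        rfl
      · intro a ha
        rfl
    rw [hcnt]
    simp only
    rw [hbij]
    exact ht
  have hcnttot : ∀ i, cnt 0 i + cnt 1 i = i := by
    intro i
    rw [hcnt]
    have hre : (Finset.range i).filter (fun j => t' j = 1)
        = (Finset.range i).filter (fun j => ¬ t' j = 0) :=
      Finset.filter_congr (fun j _ => (hfin2 (t' j)).symm)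
    simp only [hre]
    rw [Finset.card_filter_add_card_filter_not, Finset.card_range]
  have hcnt1 : cnt 1 (2 * n) = n := by
    have := hcnttot (2 * n)
    omega
  have hcntmono : ∀ (w : Fin 2) i, i ≤ 2*n → cnt w i ≤ cnt w (2*n) := by
    intro w i hi
    exact Finset.card_le_card (Finset.filter_subset_filter _ (Finset.range_subset_range.2 hi))
  -- the main recursion
  have main : ∀ i, i ≤ 2 * n → ∃ v : ℕ → Ordinal,
      (∀ j, j < i → v j < L) ∧ (∀ j, j < i → ∀ k, k < j → v k < v j) ∧
      GoodP S C L n (n - cnt 0 i) (((Finset.range i).filter (fun j => t' j = 0)).image v) ∧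
      GoodP S C L n (n - cnt 1 i) (((Finset.range i).filter (fun j => t' j = 1)).image v) := by
    intro i
    induction i with
    | zero =>
      intro _
      refine ⟨fun _ => 0, by omega, by omega, ?_, ?_⟩ <;>
      · have h0 : cnt 0 0 = 0 ∧ cnt 1 0 = 0 := by
          constructor <;> (rw [hcnt]; simp)
        simp only [Finset.range_zero, Finset.filter_empty, Finset.image_empty]
        first
          | (rw [h0.1, Nat.sub_zero]; exact hgood)
          | (rw [h0.2, Nat.sub_zero]; exact hgood)
    | succ i ih =>
      intro hi1
      obtain ⟨v, hvL, hvmono, hg0, hg1⟩ := ih (Nat.le_of_succ_le hi1)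
      set ζ := ((Finset.range i).image v).sup id with hζ
      have hζL : ζ < L := by
        rw [hζ, Finset.sup_lt_iff hL0]
        intro b hb
        obtain ⟨j, hj, rfl⟩ := Finset.mem_image.1 hb
        exact hvL j (Finset.mem_range.1 hj)
      have hζge : ∀ j, j < i → v j ≤ ζ := fun j hj =>
        Finset.le_sup (f := id) (Finset.mem_image_of_mem v (Finset.mem_range.2 hj))
      have hiin : i ∉ Finset.range i := Finset.notMem_range_self
      have h01 : t' i = 0 ∨ t' i = 1 := by
        rcases hfin2 (t' i) with ⟨ha, hb⟩
        by_cases h : t' i = 0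
        · exact Or.inl h
        · exact Or.inr (ha h)
      rcases h01 with h2 | h2
      · -- case `t' i = 0` : extend the `γ`-side
        have hc1 : cnt 0 (i+1) = cnt 0 i + 1 := by
          rw [hcnt]
          simp only
          rw [Finset.range_add_one, Finset.filter_insert, if_pos h2,
            Finset.card_insert_of_notMem (fun hmem => hiin (Finset.filter_subset _ _ hmem))]
        have hc2 : cnt 1 (i+1) = cnt 1 i := by
          rw [hcnt]
          simp only
          rw [Finset.range_add_one, Finset.filter_insert,
            if_neg (by rw [h2]; exact fun hh => absurd hh (by decide))]
        have hle : cnt 0 (i+1) ≤ n := by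
          have := hcntmono 0 (i+1) hi1
          rw [hcnt0] at this
          exact this
        have hrw : n - cnt 0 i = (n - cnt 0 (i+1)) + 1 := by omega
        rw [hrw] at hg0
        obtain ⟨ξ, hξL, hζξ, hPξ, hgood'⟩ := hg0 ζ hζL
        set v' : ℕ → Ordinal := fun j => if j = i then ξ else v j with hv'
        have hagree : ∀ j, j < i → v' j = v j := by
          intro j hj
          rw [hv']
          simp only [Nat.ne_of_lt hj, if_false]
        refine ⟨v', ?_, ?_, ?_, ?_⟩
        · intro j hj
          by_cases hji : j = i
          · rw [hv']; simp only [hji, if_true]; exact hξL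
          · rw [hagree j (by omega)]; exact hvL j (by omega)
        · intro j hj k hk
          by_cases hji : j = i
          · subst hji
            rw [hagree k hk, hv']
            simp only [if_true]
            exact lt_of_le_of_lt (hζge k hk) hζξ
          · have hj' : j < i := by omega
            rw [hagree j hj', hagree k (by omega)]
            exact hvmono j hj' k hk
        · have hA : ((Finset.range (i+1)).filter (fun j => t' j = 0)).image v'
              = insert ξ (((Finset.range i).filter (fun j => t' j = 0)).image v) := by
            rw [Finset.range_add_one, Finset.filter_insert, if_pos h2, Finset.image_insert]
            rw [hv']
            simp only [if_true]
            congr 1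
            apply Finset.image_congr
            intro j hj
            have hj' : j < i := Finset.mem_range.1 (Finset.mem_filter.1 hj).1
            simp only [Nat.ne_of_lt hj', if_false]
          rw [hA]
          exact hgood'
        · have hB : ((Finset.range (i+1)).filter (fun j => t' j = 1)).image v'
              = ((Finset.range i).filter (fun j => t' j = 1)).image v := by
            rw [Finset.range_add_one, Finset.filter_insert,
              if_neg (by rw [h2]; exact fun hh => absurd hh (by decide))]
            apply Finset.image_congr
            intro j hj
            have hj' : j < i := Finset.mem_range.1 (Finset.mem_filter.1 hj).1
            rw [hv']
            simp only [Nat.ne_of_lt hj', if_false]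
          rw [hB, hc2]
          exact hg1
      · -- case `t' i = 1` : extend the `δ`-side
        have hc1 : cnt 1 (i+1) = cnt 1 i + 1 := by
          rw [hcnt]
          simp only
          rw [Finset.range_add_one, Finset.filter_insert, if_pos h2,
            Finset.card_insert_of_notMem (fun hmem => hiin (Finset.filter_subset _ _ hmem))]
        have hc2 : cnt 0 (i+1) = cnt 0 i := by
          rw [hcnt]
          simp only
          rw [Finset.range_add_one, Finset.filter_insert,
            if_neg (by rw [h2]; exact fun hh => absurd hh (by decide))]
        have hle : cnt 1 (i+1) ≤ n := by
          have := hcntmono 1 (i+1) hi1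
          rw [hcnt1] at this
          exact this
        have hrw : n - cnt 1 i = (n - cnt 1 (i+1)) + 1 := by omega
        rw [hrw] at hg1
        obtain ⟨ξ, hξL, hζξ, hPξ, hgood'⟩ := hg1 ζ hζL
        set v' : ℕ → Ordinal := fun j => if j = i then ξ else v j with hv'
        have hagree : ∀ j, j < i → v' j = v j := by
          intro j hj
          rw [hv']
          simp only [Nat.ne_of_lt hj, if_false]
        refine ⟨v', ?_, ?_, ?_, ?_⟩
        · intro j hj
          by_cases hji : j = i
          · rw [hv']; simp only [hji, if_true]; exact hξL
          · rw [hagree j (by omega)]; exact hvL j (by omega)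
        · intro j hj k hk
          by_cases hji : j = i
          · subst hji
            rw [hagree k hk, hv']
            simp only [if_true]
            exact lt_of_le_of_lt (hζge k hk) hζξ
          · have hj' : j < i := by omega
            rw [hagree j hj', hagree k (by omega)]
            exact hvmono j hj' k hk
        · have hA : ((Finset.range (i+1)).filter (fun j => t' j = 0)).image v'
              = ((Finset.range i).filter (fun j => t' j = 0)).image v := by
            rw [Finset.range_add_one, Finset.filter_insert,
              if_neg (by rw [h2]; exact fun hh => absurd hh (by decide))]
            apply Finset.image_congr
            intro j hj
            have hj' : j < i := Finset.mem_range.1 (Finset.mem_filter.1 hj).1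
            rw [hv']
            simp only [Nat.ne_of_lt hj', if_false]
          rw [hA, hc2]
          exact hg0
        · have hB : ((Finset.range (i+1)).filter (fun j => t' j = 1)).image v'
              = insert ξ (((Finset.range i).filter (fun j => t' j = 1)).image v) := by
            rw [Finset.range_add_one, Finset.filter_insert, if_pos h2, Finset.image_insert]
            rw [hv']
            simp only [if_true]
            congr 1
            apply Finset.image_congr
            intro j hj
            have hj' : j < i := Finset.mem_range.1 (Finset.mem_filter.1 hj).1
            simp only [Nat.ne_of_lt hj', if_false]
          rw [hB]
          exact hgood'
  -- extract the two witnesses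
  obtain ⟨v, hvL, hvmono, hg0, hg1⟩ := main (2*n) le_rfl
  rw [hcnt0, Nat.sub_self] at hg0
  rw [hcnt1, Nat.sub_self] at hg1
  set A := ((Finset.range (2*n)).filter (fun j => t' j = 0)).image v with hA
  set B := ((Finset.range (2*n)).filter (fun j => t' j = 1)).image v with hB
  obtain ⟨γ, hγS, -, hγfirst⟩ := hg0 0 hL0
  have hγL : γ < L := (hS hγS).1
  obtain ⟨δ, hδS, hγδ, hδfirst⟩ := hg1 γ hγL
  have hinj : ∀ j, j < 2*n → ∀ k, k < 2*n → v j = v k → j = k := by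
    intro j hj k hk heq
    rcases lt_trichotomy j k with h | h | h
    · exact absurd heq (ne_of_lt (hvmono k hk j h))
    · exact h
    · exact absurd heq (ne_of_gt (hvmono j hj k h))
  have hinjOn : ∀ s : Finset ℕ, s ⊆ Finset.range (2*n) → Set.InjOn v s := by
    intro s hs x hx y hy heq
    exact hinj x (Finset.mem_range.1 (hs hx)) y (Finset.mem_range.1 (hs hy)) heq
  refine ⟨γ, hγS, δ, hδS, hγδ, A, B, hγfirst, hδfirst, ?_, ?_⟩
  · -- disjointness
    rw [Finset.disjoint_left]
    intro x hxA hxB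
    obtain ⟨j, hj, rfl⟩ := Finset.mem_image.1 hxA
    obtain ⟨k, hk, hkeq⟩ := Finset.mem_image.1 hxB
    have hjf := Finset.mem_filter.1 hj
    have hkf := Finset.mem_filter.1 hk
    have hkj : k = j := hinj k (Finset.mem_range.1 hkf.1) j (Finset.mem_range.1 hjf.1) hkeq
    rw [hkj] at hkf
    rw [hjf.2] at hkf
    exact absurd hkf.2 (by decide)
  · -- the type is realized
    have hAcard : A.card = n := by
      rw [hA, Finset.card_image_of_injOn (hinjOn _ (Finset.filter_subset _ _))]
      have := hcnt0
      rw [hcnt] at this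
      exact this
    have hBcard : B.card = n := by
      rw [hB, Finset.card_image_of_injOn (hinjOn _ (Finset.filter_subset _ _))]
      have := hcnt1
      rw [hcnt] at this
      exact this
    have hre : (Finset.range (2*n)).filter (fun j => t' j = 1)
        = (Finset.range (2*n)).filter (fun j => ¬ t' j = 0) :=
      Finset.filter_congr (fun j _ => (hfin2 (t' j)).symm)
    have hU : A ∪ B = (Finset.range (2*n)).image v := by
      rw [hA, hB, ← Finset.image_union, hre, Finset.filter_union_filter_not_eq]
    have hUcard : (A ∪ B).card = 2*n := by
      rw [hU, Finset.card_image_of_injOn (hinjOn _ (subset_refl _)), Finset.card_range]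
    refine ⟨hAcard, hBcard, hUcard, ?_⟩
    intro i
    have hfm : StrictMono (fun i : Fin (2*n) => v (i : ℕ)) := by
      intro i1 i2 h12
      exact hvmono (i2 : ℕ) i2.isLt (i1 : ℕ) h12
    have hmemU : ∀ i : Fin (2*n), v (i : ℕ) ∈ A ∪ B := fun i => by
      rw [hU]
      exact Finset.mem_image_of_mem v (Finset.mem_range.2 i.isLt)
    have hemb := congrFun (Finset.orderEmbOfFin_unique hUcard hmemU hfm) i
    rw [Finset.coe_orderIsoOfFin_apply, ← hemb]
    constructor
    · intro hvA
      rw [hA] at hvA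
      obtain ⟨j, hj, hjeq⟩ := Finset.mem_image.1 hvA
      have hjf := Finset.mem_filter.1 hj
      have hji : j = (i : ℕ) :=
        hinj j (Finset.mem_range.1 hjf.1) (i : ℕ) i.isLt hjeq
      rw [← ht'eq i, ← hji]
      exact hjf.2
    · intro hti
      rw [hA]
      refine Finset.mem_image_of_mem v (Finset.mem_filter.2 ⟨Finset.mem_range.2 i.isLt, ?_⟩)
      rw [ht'eq i]
      exact hti
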